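/- In a 3-dimensional para-Kenmotsu manifold, the Ricci operator Q (defined by S(X,Y) = g(QX,Y)) satisfies the covariant derivative formula (∇_X Q)Y = (Xr/2)[Y − η(Y)ζ] − (3 + r/2)[g(X,Y)ζ − 2η(X)η(Y)ζ + η(Y)X] for all vector fields X, Y, where r is the scalar curvature. -/

import Mathlib

/-!  An abstract model of the calculus of smooth functions and vector fields on a
semi-Riemannian manifold.  `F` plays the role of the ring of smooth real-valued
functions and `V` the role of the module of smooth vector fields.  -/

/-- Semi-Riemannian structure: metric `g`, directional derivative `dd`, Lie bracket,
Levi-Civita connection `nabla`, Ricci tensor `ric`, Ricci operator `ricOp` and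
scalar curvature `scal`, together with their standard axioms. -/
structure SemiRiemannian (F V : Type*) [CommRing F] [Algebra ℝ F]
    [AddCommGroup V] [Module F V] where
  g : V → V → F
  dd : V → F → F
  bracket : V → V → V
  nabla : V → V → V
  ric : V → V → F
  ricOp : V → V
  scal : F
  g_symm : ∀ X Y, g X Y = g Y X
  g_addL : ∀ X Y Z, g (X + Y) Z = g X Z + g Y Z
  g_smulL : ∀ (f : F) (X Y : V), g (f • X) Y = f * g X Y
  g_addR : ∀ X Y Z, g X (Y + Z) = g X Y + g X Z
  g_smulR : ∀ (f : F) (X Y : V), g X (f • Y) = f * g X Y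
  g_nondeg : ∀ X, (∀ Y, g X Y = 0) → X = 0
  dd_add : ∀ X (a b : F), dd X (a + b) = dd X a + dd X b
  dd_mul : ∀ X (a b : F), dd X (a * b) = dd X a * b + a * dd X b
  dd_const : ∀ X (c : ℝ), dd X ((algebraMap ℝ F) c) = 0
  dd_addL : ∀ X Y (a : F), dd (X + Y) a = dd X a + dd Y a
  dd_smulL : ∀ (f : F) (X : V) (a : F), dd (f • X) a = f * dd X a
  nabla_addL : ∀ X Y Z, nabla (X + Y) Z = nabla X Z + nabla Y Z
  nabla_smulL : ∀ (f : F) (X Y : V), nabla (f • X) Y = f • nabla X Y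
  nabla_addR : ∀ X Y Z, nabla X (Y + Z) = nabla X Y + nabla X Z
  nabla_leibniz : ∀ (X : V) (f : F) (Y : V),
    nabla X (f • Y) = dd X f • Y + f • nabla X Y
  compat : ∀ X Y Z, dd X (g Y Z) = g (nabla X Y) Z + g Y (nabla X Z)
  torsion_free : ∀ X Y, nabla X Y - nabla Y X = bracket X Y
  ric_symm : ∀ X Y, ric X Y = ric Y X
  ricOp_spec : ∀ X Y, g (ricOp X) Y = ric X Y

namespace SemiRiemannian

variable {F V : Type*} [CommRing F] [Algebra ℝ F] [AddCommGroup V] [Module F V]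

/-- The Riemann curvature tensor `R(X,Y)Z`. -/
def curv (D : SemiRiemannian F V) (X Y Z : V) : V :=
  D.nabla X (D.nabla Y Z) - D.nabla Y (D.nabla X Z) - D.nabla (D.bracket X Y) Z

/-- The Lie derivative of the metric: `(£_W g)(X,Y)`. -/
def lieG (D : SemiRiemannian F V) (W X Y : V) : F :=
  D.dd W (D.g X Y) - D.g (D.bracket W X) Y - D.g X (D.bracket W Y)

/-- `Gf` is the gradient of `f` : `g(Gf, X) = X f` for all `X`. -/
def IsGradient (D : SemiRiemannian F V) (f : F) (Gf : V) : Prop :=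
  ∀ X, D.g Gf X = D.dd X f

/-- The Hessian `∇²f(X,Y) = g(∇_X Df, Y)`, where `Df` is the gradient of `f`. -/
def hess (D : SemiRiemannian F V) (Df : V) (X Y : V) : F :=
  D.g (D.nabla X Df) Y

/-- A function is constant iff all its directional derivatives vanish. -/
def IsConstF (D : SemiRiemannian F V) (f : F) : Prop := ∀ X, D.dd X f = 0

end SemiRiemannian

/-- An almost paracontact metric structure `(φ, ζ, η, g)`. -/
structure APContact (F V : Type*) [CommRing F] [Algebra ℝ F]
    [AddCommGroup V] [Module F V] extends SemiRiemannian F V where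
  phi : V → V
  zeta : V
  eta : V → F
  phi_add : ∀ X Y, phi (X + Y) = phi X + phi Y
  phi_smul : ∀ (f : F) (X : V), phi (f • X) = f • phi X
  phi_sq : ∀ X, phi (phi X) = X - eta X • zeta
  eta_zeta : eta zeta = 1
  eta_eq : ∀ X, eta X = g X zeta
  g_phi : ∀ X Y, g (phi X) (phi Y) = - g X Y + eta X * eta Y

/-- A `(2n+1)`-dimensional para-Kenmotsu manifold:
`(∇_X φ)Y = g(φX,Y)ζ − η(Y)φX`, `∇_X ζ = X − η(X)ζ`, `S(X,ζ) = −2n η(X)`. -/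
structure ParaKenmotsu (F V : Type*) [CommRing F] [Algebra ℝ F]
    [AddCommGroup V] [Module F V] (n : ℕ) extends APContact F V where
  nabla_phi : ∀ X Y,
    nabla X (phi Y) - phi (nabla X Y) = g (phi X) Y • zeta - eta Y • phi X
  nabla_zeta : ∀ X, nabla X zeta = X - eta X • zeta
  ric_zeta : ∀ X, ric X zeta = -(2 * (n : F)) * eta X

/-- A 3-dimensional para-Kenmotsu manifold, together with the standard
3-dimensional identities `ζ r = −2(r+6)` and `QX = (r/2+1)X − (r/2+3)η(X)ζ`. -/
structure ParaKenmotsu3 (F V : Type*) [CommRing F] [Algebra ℝ F]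
    [AddCommGroup V] [Module F V] extends ParaKenmotsu F V 1 where
  zeta_scal : dd zeta scal = -2 * (scal + 6)
  ricOp_eq : ∀ X,
    ricOp X = ((1/2 : ℝ) • scal + 1) • X - (((1/2 : ℝ) • scal + 3) * eta X) • zeta

/-- A `(2n+1)`-dimensional para-Sasakian manifold:
`(∇_X φ)Y = −g(X,Y)ζ + η(Y)X`, `∇_X ζ = −φX`, `S(X,ζ) = −2n η(X)`. -/
structure ParaSasakian (F V : Type*) [CommRing F] [Algebra ℝ F]
    [AddCommGroup V] [Module F V] (n : ℕ) extends APContact F V where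
  nabla_phi : ∀ X Y,
    nabla X (phi Y) - phi (nabla X Y) = -(g X Y) • zeta + eta Y • X
  nabla_zeta : ∀ X, nabla X zeta = - phi X
  ric_zeta : ∀ X, ric X zeta = -(2 * (n : F)) * eta X

/-- A 3-dimensional para-Sasakian manifold, together with the standard
3-dimensional identities `QX = (r/2+1)X − (r/2+3)η(X)ζ`, `ζ r = 0` and the
expression of the curvature tensor of a 3-dimensional semi-Riemannian manifold
in terms of the Ricci tensor. -/
structure ParaSasakian3 (F V : Type*) [CommRing F] [Algebra ℝ F]
    [AddCommGroup V] [Module F V] extends ParaSasakian F V 1 where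
  zeta_scal : dd zeta scal = 0
  ricOp_eq : ∀ X,
    ricOp X = ((1/2 : ℝ) • scal + 1) • X - (((1/2 : ℝ) • scal + 3) * eta X) • zeta
  curv_eq : ∀ X Y Z,
    nabla X (nabla Y Z) - nabla Y (nabla X Z) - nabla (bracket X Y) Z =
      g Y Z • ricOp X - g X Z • ricOp Y + ric Y Z • X - ric X Z • Y
        - ((1/2 : ℝ) • scal) • (g Y Z • X - g X Z • Y)

/-- A para-cosymplectic manifold: `∇ζ = 0`, `R(X,Y)ζ = 0`, `S(X,ζ) = 0`. -/
structure ParaCosymplectic (F V : Type*) [CommRing F] [Algebra ℝ F]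
    [AddCommGroup V] [Module F V] extends APContact F V where
  nabla_zeta : ∀ X, nabla X zeta = 0
  curv_zeta : ∀ X Y,
    nabla X (nabla Y zeta) - nabla Y (nabla X zeta) - nabla (bracket X Y) zeta = 0
  ric_zeta : ∀ X, ric X zeta = 0

/-- A 3-dimensional para-cosymplectic manifold, together with the standard
3-dimensional identities `QX = (r/2)[X − η(X)ζ]`,
`S(X,Y) = (r/2)[g(X,Y) − η(X)η(Y)]` and `ζ r = 0`. -/
structure ParaCosymplectic3 (F V : Type*) [CommRing F] [Algebra ℝ F]
    [AddCommGroup V] [Module F V] extends ParaCosymplectic F V where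
  ricOp_eq : ∀ X, ricOp X = ((1/2 : ℝ) • scal) • (X - eta X • zeta)
  ric_eq : ∀ X Y, ric X Y = ((1/2 : ℝ) • scal) * (g X Y - eta X * eta Y)
  zeta_scal : dd zeta scal = 0

/-- In a 3-dimensional para-Kenmotsu manifold the Ricci operator
`Q` satisfies
`(∇_X Q)Y = (Xr/2)[Y − η(Y)ζ] − (3 + r/2)[g(X,Y)ζ − 2η(X)η(Y)ζ + η(Y)X]`. -/
theorem paraKenmotsu3_nabla_ricOp
    {F V : Type*} [CommRing F] [Algebra ℝ F] [AddCommGroup V] [Module F V]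
    (M : ParaKenmotsu3 F V) :
    ∀ X Y, M.nabla X (M.ricOp Y) - M.ricOp (M.nabla X Y)
      = ((1/2 : ℝ) • M.dd X M.scal) • (Y - M.eta Y • M.zeta)
        - ((3 : F) + (1/2 : ℝ) • M.scal) •
            (M.g X Y • M.zeta - (2 * (M.eta X * M.eta Y)) • M.zeta + M.eta Y • X) := by
  intro X Y
  set c : F := algebraMap ℝ F (1/2) with hc
  -- basic derivative facts
  have dd_cst : ∀ (Z : V) (r : ℝ), M.dd Z ((algebraMap ℝ F) r) = 0 := M.dd_const
  have dd_one : ∀ Z : V, M.dd Z (1 : F) = 0 := by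
    intro Z; simpa using M.dd_const Z 1
  have dd_c : ∀ Z : V, M.dd Z c = 0 := fun Z => M.dd_const Z (1/2)
  have dd_neg : ∀ (Z : V) (a : F), M.dd Z (-a) = - M.dd Z a := by
    intro Z a
    have : (-a : F) = (-1 : F) * a := by ring
    rw [this, M.dd_mul]
    have h1 : M.dd Z (-1 : F) = 0 := by
      have := M.dd_const Z (-1); simpa using this
    rw [h1]; ring
  have g_subR : ∀ (A B C : V), M.g A (B - C) = M.g A B - M.g A C := by
    intro A B C
    have : B - C = B + (-1 : F) • C := by rw [neg_one_smul, sub_eq_add_neg]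
    rw [this, M.g_addR, M.g_smulR]; ring
  -- derivative of eta
  have dd_eta : ∀ (Z W : V), M.dd Z (M.eta W)
      = M.eta (M.nabla Z W) + M.g Z W - M.eta Z * M.eta W := by
    intro Z W
    rw [M.eta_eq W, M.compat, M.nabla_zeta, ← M.eta_eq, g_subR, M.g_smulR,
      ← M.eta_eq, M.g_symm W Z]
    ring
  -- abbreviations
  set s : F := M.scal with hs
  set A : F := c * s + 1 with hA
  set B : F := c * s + 3 with hB
  have ricY : M.ricOp Y = A • Y - (B * M.eta Y) • M.zeta := by
    rw [M.ricOp_eq Y]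
    simp only [Algebra.smul_def]
    rfl
  have ricXY : M.ricOp (M.nabla X Y)
      = A • (M.nabla X Y) - (B * M.eta (M.nabla X Y)) • M.zeta := by
    rw [M.ricOp_eq]
    simp only [Algebra.smul_def]
    rfl
  have nabla_subR : ∀ (Z P Q : V), M.nabla Z (P - Q) = M.nabla Z P - M.nabla Z Q := by
    intro Z P Q
    have h : P - Q = P + (-1 : F) • Q := by rw [neg_one_smul, sub_eq_add_neg]
    rw [h, M.nabla_addR, M.nabla_leibniz]
    have h1 : M.dd Z (-1 : F) = 0 := by
      have := M.dd_const Z (-1); simpa using this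
    rw [h1, zero_smul, zero_add, neg_one_smul, sub_eq_add_neg]
  have h3 : M.dd X (3 : F) = 0 := by
    have h : ((algebraMap ℝ F) (3 : ℝ)) = (3 : F) := map_ofNat _ 3
    rw [← h]; exact M.dd_const X 3
  have ddA : M.dd X A = c * M.dd X s := by
    rw [hA, M.dd_add, M.dd_mul, dd_c, dd_one X]; ring
  have ddB : M.dd X (B * M.eta Y)
      = (c * M.dd X s) * M.eta Y
        + B * (M.eta (M.nabla X Y) + M.g X Y - M.eta X * M.eta Y) := by
    rw [M.dd_mul, dd_eta]
    have hdB : M.dd X B = c * M.dd X s := by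
      rw [hB, M.dd_add, M.dd_mul, dd_c, h3]; ring
    rw [hdB]
  have expand : M.nabla X (M.ricOp Y)
      = (c * M.dd X s) • Y + A • M.nabla X Y
        - (((c * M.dd X s) * M.eta Y
            + B * (M.eta (M.nabla X Y) + M.g X Y - M.eta X * M.eta Y)) • M.zeta
          + (B * M.eta Y) • (X - M.eta X • M.zeta)) := by
    rw [ricY, nabla_subR, M.nabla_leibniz, M.nabla_leibniz, M.nabla_zeta, ddA, ddB]
  rw [expand, ricXY]
  have hhalf : ((1/2 : ℝ) • M.dd X M.scal) = c * M.dd X s := by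
    rw [Algebra.smul_def, hc, hs]
  have hhalf2 : ((3 : F) + (1/2 : ℝ) • M.scal) = B := by
    rw [Algebra.smul_def, hB, hc, hs]; ring
  rw [hhalf, hhalf2]
  match_scalars <;> ring
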